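/- The function s(x,t) = (c(1+ω) e^{t/2}·5 − (4ω+5)e^t x) / ((4ω+5)e^t − 4ω) (componentwise, with c ∈ ℝ² and x ∈ ℝ²) solves the score Fokker–Planck equation ∂_t s = (1/2)(∇(s·x) + Δs + ∇‖s‖²) for all t > 0 where (4ω+5)e^t − 4ω ≠ 0. -/

import Mathlib

/-- Partial derivative in the `i`-th coordinate direction. -/
noncomputable def pd {n : ℕ} (f : (Fin n → ℝ) → ℝ) (i : Fin n) (x : Fin n → ℝ) : ℝ :=
  fderiv ℝ f x (Pi.single i 1)

lemma pd_of_hasFDerivAt {n : ℕ} {f : (Fin n → ℝ) → ℝ} {L : (Fin n → ℝ) →L[ℝ] ℝ}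
    {x : Fin n → ℝ} (h : HasFDerivAt f L x) (i : Fin n) :
    pd f i x = L (Pi.single i 1) := by rw [pd, h.fderiv]

lemma hproj {n : ℕ} (j : Fin n) (y : Fin n → ℝ) :
    HasFDerivAt (fun z : Fin n → ℝ => z j)
      (ContinuousLinearMap.proj j : (Fin n → ℝ) →L[ℝ] ℝ) y :=
  (ContinuousLinearMap.proj j : (Fin n → ℝ) →L[ℝ] ℝ).hasFDerivAt

lemma haffine (a b : ℝ) (j : Fin 2) (x : Fin 2 → ℝ) :
    HasFDerivAt (fun y : Fin 2 → ℝ => a - b * y j)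
      ((0 : (Fin 2 → ℝ) →L[ℝ] ℝ) - b • ContinuousLinearMap.proj j) x :=
  (hasFDerivAt_const a x).sub ((hproj j x).const_mul b)

lemma pd_affine (a b : ℝ) (j i : Fin 2) (x : Fin 2 → ℝ) :
    pd (fun y : Fin 2 → ℝ => a - b * y j) i x = -(b * (Pi.single i 1 : Fin 2 → ℝ) j) := by
  rw [pd_of_hasFDerivAt (haffine a b j x)]; simp

lemma pd_comb (a : Fin 2 → ℝ) (b : ℝ) (i : Fin 2) (x : Fin 2 → ℝ) :
    pd (fun y => ∑ j, (a j - b * y j) * y j) i x = a i - 2 * b * x i := by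
  have e : (fun y : Fin 2 → ℝ => ∑ j, (a j - b * y j) * y j)
      = fun y : Fin 2 → ℝ => (a 0 - b * y 0) * y 0 + (a 1 - b * y 1) * y 1 := by
    funext y; rw [Fin.sum_univ_two]
  rw [e]
  have h := ((haffine (a 0) b 0 x).mul (hproj 0 x)).add ((haffine (a 1) b 1 x).mul (hproj 1 x))
  rw [pd_of_hasFDerivAt (f := fun y : Fin 2 → ℝ => (a 0 - b * y 0) * y 0 + (a 1 - b * y 1) * y 1) h]
  fin_cases i <;>
    simp [Pi.single_apply] <;> ring

lemma pd_sq (a : Fin 2 → ℝ) (b : ℝ) (i : Fin 2) (x : Fin 2 → ℝ) :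
    pd (fun y => ∑ j, (a j - b * y j) ^ 2) i x = -2 * b * (a i - b * x i) := by
  have e : (fun y : Fin 2 → ℝ => ∑ j, (a j - b * y j) ^ 2)
      = fun y : Fin 2 → ℝ => (a 0 - b * y 0) * (a 0 - b * y 0)
          + (a 1 - b * y 1) * (a 1 - b * y 1) := by
    funext y; rw [Fin.sum_univ_two]; ring
  rw [e]
  have h := ((haffine (a 0) b 0 x).mul (haffine (a 0) b 0 x)).add
    ((haffine (a 1) b 1 x).mul (haffine (a 1) b 1 x))
  rw [pd_of_hasFDerivAt (f := fun y : Fin 2 → ℝ => (a 0 - b * y 0) * (a 0 - b * y 0)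
          + (a 1 - b * y 1) * (a 1 - b * y 1)) h]
  fin_cases i <;>
    simp [Pi.single_apply] <;> ring


/-- s(x,t) = (5c(1+ω)e^{t/2} − (4ω+5)e^t x)/((4ω+5)e^t − 4ω) solves the
score Fokker–Planck equation ∂ₜ s = (1/2)(∇(s·x) + Δs + ∇‖s‖²) for t > 0 whenever
(4ω+5)e^t − 4ω ≠ 0. -/
theorem stmt_12 (c : Fin 2 → ℝ) (ω : ℝ)
    (s : (Fin 2 → ℝ) → ℝ → Fin 2 → ℝ)
    (hs : ∀ x t i,
      s x t i = (5 * c i * (1 + ω) * Real.exp (t / 2)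
          - (4 * ω + 5) * Real.exp t * x i)
        / ((4 * ω + 5) * Real.exp t - 4 * ω)) :
    ∀ (x : Fin 2 → ℝ) (t : ℝ), 0 < t →
      (4 * ω + 5) * Real.exp t - 4 * ω ≠ 0 →
      ∀ i, deriv (fun τ => s x τ i) t =
        (1 / 2) * (pd (fun y => ∑ j, s y t j * y j) i x
          + (∑ j, pd (fun y => pd (fun z => s z t i) j y) j x)
          + pd (fun y => ∑ j, (s y t j) ^ 2) i x) := by
  intro x t ht hD i
  set D := (4 * ω + 5) * Real.exp t - 4 * ω with hDdef
  set b := (4 * ω + 5) * Real.exp t / D with hbdef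
  set a : Fin 2 → ℝ := fun j => 5 * c j * (1 + ω) * Real.exp (t / 2) / D with hadef
  have hsa : ∀ (y : Fin 2 → ℝ) (j : Fin 2), s y t j = a j - b * y j := by
    intro y j
    rw [hs, hadef, hbdef, hDdef]; ring
  -- time derivative
  have hfun : (fun τ => s x τ i)
      = fun τ => (5 * c i * (1 + ω) * Real.exp (τ / 2)
          - (4 * ω + 5) * Real.exp τ * x i) / ((4 * ω + 5) * Real.exp τ - 4 * ω) :=
    funext fun τ => hs x τ i
  have h1 : HasDerivAt (fun τ : ℝ => Real.exp (τ / 2)) (Real.exp (t / 2) * (1 / 2)) t := by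
    have := (Real.hasDerivAt_exp (t / 2)).comp t ((hasDerivAt_id t).div_const 2)
    exact this
  have hN : HasDerivAt (fun τ : ℝ => 5 * c i * (1 + ω) * Real.exp (τ / 2)
      - (4 * ω + 5) * Real.exp τ * x i)
      (5 * c i * (1 + ω) * (Real.exp (t / 2) * (1 / 2)) - (4 * ω + 5) * Real.exp t * x i) t :=
    (h1.const_mul _).sub (((Real.hasDerivAt_exp t).const_mul _).mul_const _)
  have hDen : HasDerivAt (fun τ : ℝ => (4 * ω + 5) * Real.exp τ - 4 * ω)
      ((4 * ω + 5) * Real.exp t) t := by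
    simpa using ((Real.hasDerivAt_exp t).const_mul ((4 : ℝ) * ω + 5)).sub_const (4 * ω)
  have hq : deriv (fun τ : ℝ => (5 * c i * (1 + ω) * Real.exp (τ / 2)
      - (4 * ω + 5) * Real.exp τ * x i) / ((4 * ω + 5) * Real.exp τ - 4 * ω)) t = _ :=
    (hN.div hDen hD).deriv
  rw [hfun, hq]
  -- spatial derivatives
  have e1 : (fun y => ∑ j, s y t j * y j) = fun y : Fin 2 → ℝ => ∑ j, (a j - b * y j) * y j := by
    funext y; exact Finset.sum_congr rfl fun j _ => by rw [hsa]
  have e3 : (fun y => ∑ j, (s y t j) ^ 2) = fun y : Fin 2 → ℝ => ∑ j, (a j - b * y j) ^ 2 := by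
    funext y; exact Finset.sum_congr rfl fun j _ => by rw [hsa]
  have hlap : ∀ j : Fin 2, pd (fun y => pd (fun z => s z t i) j y) j x = 0 := by
    intro j
    have einner : (fun z => s z t i) = fun z : Fin 2 → ℝ => a i - b * z i :=
      funext fun z => hsa z i
    have e2 : (fun y => pd (fun z => s z t i) j y)
        = fun _ : Fin 2 → ℝ => -(b * (Pi.single j 1 : Fin 2 → ℝ) i) := by
      funext y; rw [einner, pd_affine]
    rw [e2, pd]; simp
  rw [e1, e3, pd_comb, pd_sq, Fin.sum_univ_two, hlap 0, hlap 1]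
  rw [hadef, hbdef, hDdef]
  have hexp := Real.exp_ne_zero t
  have hD' : (4 * ω + 5) * Real.exp t - 4 * ω ≠ 0 := hD
  field_simp
  have hD'' : (ω * 4 + 5) * Real.exp t - ω * 4 ≠ 0 := by rwa [mul_comm ω 4]
  field_simp
  ring
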